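/- Let V be a complex vector space of dimension g ≥ 3 and let X ⊆ S(V,V*) be a 3-dimensional linear subspace such that for every v ∈ V the evaluation map e_v : X → V* fails to be injective. Then X = W^⊥ for some linear subspace W ⊆ V of dimension g - 2. -/

import Mathlib

open Module

namespace OKS

variable {V : Type*} [AddCommGroup V] [Module ℂ V]

lemma dep_of_not_indep {x y : Module.Dual ℂ V} (h : ¬ LinearIndependent ℂ ![x, y]) :
    ∀ z z', x z * y z' = x z' * y z := by
  rw [Fintype.linearIndependent_iff] at h
  push_neg at h
  obtain ⟨g, hg, i, hi⟩ := h
  rw [Fin.sum_univ_two] at hg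
  simp only [Matrix.cons_val_zero, Matrix.cons_val_one, Matrix.head_cons] at hg
  intro z z'
  by_cases h0 : g 0 = 0
  · have h1 : g 1 ≠ 0 := by fin_cases i <;> simp_all
    have hy : y = 0 := by
      have := congrArg (fun f => (g 1)⁻¹ • f) hg
      simp [h0, smul_smul, inv_mul_cancel₀ h1] at this
      simpa using this
    simp [hy]
  · have hx : x = ((g 0)⁻¹ * -g 1) • y := by
      have h2 : g 0 • x = -g 1 • y := by
        rw [← sub_eq_zero]; rw [← hg]; module
      have := congrArg (fun f => (g 0)⁻¹ • f) h2
      simp only [smul_smul, inv_mul_cancel₀ h0, one_smul] at this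
      rw [this]
    rw [hx]; simp only [LinearMap.smul_apply, smul_eq_mul]; ring

lemma smul_of_minors {x y : Module.Dual ℂ V} {z₀ : V} (hx : x z₀ ≠ 0)
    (h : ∀ z z', x z * y z' = x z' * y z) : y = (y z₀ / x z₀) • x := by
  ext z
  simp only [LinearMap.smul_apply, smul_eq_mul]
  field_simp
  linear_combination h z₀ z

lemma pair_swap {x y : Module.Dual ℂ V} (h : LinearIndependent ℂ ![x, y]) :
    LinearIndependent ℂ ![y, x] := by
  rw [Fintype.linearIndependent_iff] at h ⊢
  intro g hg i
  rw [Fin.sum_univ_two] at hg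
  simp only [Matrix.cons_val_zero, Matrix.cons_val_one, Matrix.head_cons] at hg
  have := h ![g 1, g 0] (by
    rw [Fin.sum_univ_two]
    simp only [Matrix.cons_val_zero, Matrix.cons_val_one, Matrix.head_cons]
    rw [← hg]; module)
  fin_cases i
  · simpa using this 1
  · simpa using this 0

lemma exists_semidual {φ ψ : Module.Dual ℂ V} (h : LinearIndependent ℂ ![φ, ψ]) :
    ∃ u, φ u = 1 ∧ ψ u = 0 := by
  have hψ : ψ ≠ 0 := by
    have := h.ne_zero 1; simpa using this
  obtain ⟨w₀, hw₀⟩ : ∃ w₀, ψ w₀ ≠ 0 := by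
    by_contra hc; push_neg at hc; exact hψ (by ext v; simpa using hc v)
  have hd : ∃ d, ψ d = 0 ∧ φ d ≠ 0 := by
    by_contra hc
    push_neg at hc
    rw [Fintype.linearIndependent_iff] at h
    have := h ![1, -(φ w₀ / ψ w₀)] (by
      rw [Fin.sum_univ_two]
      simp only [Matrix.cons_val_zero, Matrix.cons_val_one, Matrix.head_cons, one_smul]
      ext x
      have hker : ψ (x - (ψ x / ψ w₀) • w₀) = 0 := by
        simp only [map_sub, map_smul, smul_eq_mul]; field_simp; ring
      have h5 := hc _ hker
      simp only [map_sub, map_smul, smul_eq_mul] at h5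
      simp only [LinearMap.add_apply, LinearMap.smul_apply, LinearMap.neg_apply,
        LinearMap.zero_apply, smul_eq_mul, neg_mul]
      field_simp at h5 ⊢
      linear_combination h5) 0
    simp at this
  obtain ⟨d, hd1, hd2⟩ := hd
  exact ⟨(φ d)⁻¹ • d, by simp [inv_mul_cancel₀ hd2], by simp [hd1]⟩

lemma exists_dual_pair {φ ψ : Module.Dual ℂ V} (h : LinearIndependent ℂ ![φ, ψ]) :
    ∃ u w, φ u = 1 ∧ ψ u = 0 ∧ φ w = 0 ∧ ψ w = 1 := by
  obtain ⟨u, hu1, hu2⟩ := exists_semidual h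
  obtain ⟨w, hw1, hw2⟩ := exists_semidual (pair_swap h)
  exact ⟨u, w, hu1, hu2, hw2, hw1⟩

lemma span_pair_of_vanish {β γ φ : Module.Dual ℂ V} (h : LinearIndependent ℂ ![β, γ])
    (hv : ∀ v, β v = 0 → γ v = 0 → φ v = 0) : ∃ a b : ℂ, φ = a • β + b • γ := by
  obtain ⟨u, w, hu1, hu2, hw1, hw2⟩ := exists_dual_pair h
  refine ⟨φ u, φ w, ?_⟩
  ext x
  have h1 : β (x - β x • u - γ x • w) = 0 := by
    simp [map_sub, map_smul, hu1, hw1, smul_eq_mul]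
  have h2 : γ (x - β x • u - γ x • w) = 0 := by
    simp [map_sub, map_smul, hu2, hw2, smul_eq_mul]
  have := hv _ h1 h2
  simp only [map_sub, map_smul, smul_eq_mul] at this
  simp only [LinearMap.add_apply, LinearMap.smul_apply, smul_eq_mul]
  linear_combination this

lemma triple_indep {ξ β γ : Module.Dual ℂ V} (h : LinearIndependent ℂ ![β, γ])
    (hn : ∀ a b : ℂ, ξ ≠ a • β + b • γ) : LinearIndependent ℂ ![ξ, β, γ] := by
  rw [Fintype.linearIndependent_iff]
  intro g hg
  rw [Fin.sum_univ_three] at hg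
  simp only [Matrix.cons_val_zero, Matrix.cons_val_one, Matrix.head_cons,
    Matrix.cons_val_two, Matrix.tail_cons] at hg
  have hg0 : g 0 = 0 := by
    by_contra h0
    apply hn (-(g 1)/(g 0)) (-(g 2)/(g 0))
    have h2 : g 0 • ξ = -(g 1) • β + -(g 2) • γ := by
      rw [← sub_eq_zero]; rw [← hg]; module
    have h3 := congrArg (fun f => (g 0)⁻¹ • f) h2
    simp only [smul_smul, smul_add, inv_mul_cancel₀ h0, one_smul] at h3
    rw [h3, div_eq_inv_mul, div_eq_inv_mul]
  have hrest := Fintype.linearIndependent_iff.mp h ![g 1, g 2] (by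
    rw [Fin.sum_univ_two]
    simp only [Matrix.cons_val_zero, Matrix.cons_val_one, Matrix.head_cons]
    rw [← hg, hg0]; module)
  intro i
  fin_cases i
  · exact hg0
  · simpa using hrest 0
  · simpa using hrest 1

lemma exists_dual_triple {ξ β γ : Module.Dual ℂ V} (h : LinearIndependent ℂ ![ξ, β, γ]) :
    ∃ z, ξ z = 1 ∧ β z = 0 ∧ γ z = 0 := by
  have hpair : LinearIndependent ℂ ![β, γ] := by
    rw [Fintype.linearIndependent_iff] at h ⊢
    intro g hg i
    rw [Fin.sum_univ_two] at hg
    simp only [Matrix.cons_val_zero, Matrix.cons_val_one, Matrix.head_cons] at hg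
    have := h ![0, g 0, g 1] (by
      rw [Fin.sum_univ_three]
      simp only [Matrix.cons_val_zero, Matrix.cons_val_one, Matrix.head_cons,
        Matrix.cons_val_two, Matrix.tail_cons]
      rw [← hg]; module)
    fin_cases i
    · simpa using this 1
    · simpa using this 2
  obtain ⟨d, hd1, hd2, hd3⟩ : ∃ d, ξ d ≠ 0 ∧ β d = 0 ∧ γ d = 0 := by
    by_contra hc
    push_neg at hc
    obtain ⟨a, b, hab⟩ := span_pair_of_vanish hpair (fun v h1 h2 => by
      by_contra hξ
      exact (hc v hξ h1) h2)
    have := Fintype.linearIndependent_iff.mp h ![1, -a, -b] (by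
      rw [Fin.sum_univ_three]
      simp only [Matrix.cons_val_zero, Matrix.cons_val_one, Matrix.head_cons,
        Matrix.cons_val_two, Matrix.tail_cons, one_smul]
      rw [hab]; module) 0
    simp at this
  exact ⟨(ξ d)⁻¹ • d, by simp [inv_mul_cancel₀ hd1], by simp [hd2], by simp [hd3]⟩

lemma indep_of_minor {x y : Module.Dual ℂ V} {z z' : V}
    (h : x z * y z' - x z' * y z ≠ 0) : LinearIndependent ℂ ![x, y] := by
  rw [Fintype.linearIndependent_iff]
  intro g hg
  rw [Fin.sum_univ_two] at hg
  simp only [Matrix.cons_val_zero, Matrix.cons_val_one, Matrix.head_cons] at hg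
  have e1 : g 0 * x z + g 1 * y z = 0 := by
    have := congrArg (fun f : Module.Dual ℂ V => f z) hg
    simpa [LinearMap.add_apply, LinearMap.smul_apply, smul_eq_mul] using this
  have e2 : g 0 * x z' + g 1 * y z' = 0 := by
    have := congrArg (fun f : Module.Dual ℂ V => f z') hg
    simpa [LinearMap.add_apply, LinearMap.smul_apply, smul_eq_mul] using this
  have hg0 : g 0 = 0 := by
    have : g 0 * (x z * y z' - x z' * y z) = 0 := by
      linear_combination y z' * e1 - y z * e2
    exact (mul_eq_zero.mp this).resolve_right h
  have hg1 : g 1 = 0 := by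
    have : g 1 * (x z * y z' - x z' * y z) = 0 := by
      linear_combination x z * e2 - x z' * e1
    exact (mul_eq_zero.mp this).resolve_right h
  intro i; fin_cases i <;> assumption

lemma poly3 {M : Type*} [AddCommGroup M] [Module ℂ M] {w1 w2 w3 : M}
    (h : ∀ t : ℂ, t • w1 + t ^ 2 • w2 + t ^ 3 • w3 = 0) :
    w1 = 0 ∧ w2 = 0 ∧ w3 = 0 := by
  have h1 := h 1; have h2 := h (-1); have h3 := h 2
  norm_num at h1 h2 h3
  have e2 : w2 = 0 := by
    have : (2 : ℂ) • w2 = 0 := by linear_combination (norm := module) h1 + h2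
    simpa using this
  have e3 : w3 = 0 := by
    have : (6 : ℂ) • w3 = 0 := by linear_combination (norm := module) h3 - (3 : ℂ) • h1 - h2
    simpa using this
  have e1 : w1 = 0 := by linear_combination (norm := module) h1 - e2 - e3
  exact ⟨e1, e2, e3⟩

lemma quad_coeffs {q0 q1 q2 a b c : ℂ} (hab : a ≠ b) (hac : a ≠ c) (hbc : b ≠ c)
    (ha : q0 + a * q1 + a ^ 2 * q2 = 0) (hb : q0 + b * q1 + b ^ 2 * q2 = 0)
    (hc : q0 + c * q1 + c ^ 2 * q2 = 0) : q0 = 0 := by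
  have e1 : q1 + (a + b) * q2 = 0 := by
    have d1 : (a - b) * (q1 + (a + b) * q2) = 0 := by linear_combination ha - hb
    exact (mul_eq_zero.mp d1).resolve_left (sub_ne_zero.mpr hab)
  have e2 : q1 + (b + c) * q2 = 0 := by
    have d2 : (b - c) * (q1 + (b + c) * q2) = 0 := by linear_combination hb - hc
    exact (mul_eq_zero.mp d2).resolve_left (sub_ne_zero.mpr hbc)
  have h2 : q2 = 0 := by
    have : (a - c) * q2 = 0 := by linear_combination e1 - e2
    exact (mul_eq_zero.mp this).resolve_left (sub_ne_zero.mpr hac)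
  have h1 : q1 = 0 := by linear_combination e1 - (a + b) * h2
  linear_combination ha - a * h1 - a ^ 2 * h2

lemma quad_vanish_off {q0 q1 q2 : ℂ} (bad : ℂ)
    (h : ∀ t : ℂ, t ≠ bad → q0 + t * q1 + t ^ 2 * q2 = 0) : q0 = 0 := by
  obtain ⟨a, b, c, h1, h2, h3, h4, h5, h6⟩ :
      ∃ a b c : ℂ, a ≠ b ∧ a ≠ c ∧ b ≠ c ∧ a ≠ bad ∧ b ≠ bad ∧ c ≠ bad := by
    rcases eq_or_ne bad 1 with hb1 | hb1
    · exact ⟨2, 3, 4, by norm_num, by norm_num, by norm_num,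
        by rw [hb1]; norm_num, by rw [hb1]; norm_num, by rw [hb1]; norm_num⟩
    rcases eq_or_ne bad 2 with hb2 | hb2
    · exact ⟨1, 3, 4, by norm_num, by norm_num, by norm_num,
        by rw [hb2]; norm_num, by rw [hb2]; norm_num, by rw [hb2]; norm_num⟩
    rcases eq_or_ne bad 3 with hb3 | hb3
    · exact ⟨1, 2, 4, by norm_num, by norm_num, by norm_num,
        by rw [hb3]; norm_num, by rw [hb3]; norm_num, by rw [hb3]; norm_num⟩
    · exact ⟨1, 2, 3, by norm_num, by norm_num, by norm_num, hb1.symm, hb2.symm, hb3.symm⟩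
  exact quad_coeffs h1 h2 h3 (h a h4) (h b h5) (h c h6)

lemma star_aux (A B C : V →ₗ[ℂ] Module.Dual ℂ V) (v u w : V) (a b c : ℂ) (ha : a ≠ 0)
    (hv : a • A v + b • B v + c • C v = 0) :
    (B v u * C v w - C v u * B v w) • A v + (C v u * A v w - A v u * C v w) • B v +
      (A v u * B v w - B v u * A v w) • C v = 0 := by
  have hrow : ∀ z : V, a * A v z + b * B v z + c * C v z = 0 := by
    intro z
    have := congrArg (fun f : Module.Dual ℂ V => f z) hv
    simpa [LinearMap.add_apply, LinearMap.smul_apply, smul_eq_mul] using this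
  have z2 : a * (C v u * A v w - A v u * C v w) - b * (B v u * C v w - C v u * B v w) = 0 := by
    linear_combination (C v u) * hrow w - (C v w) * hrow u
  have z3 : a * (A v u * B v w - B v u * A v w) - c * (B v u * C v w - C v u * B v w) = 0 := by
    linear_combination (B v w) * hrow u - (B v u) * hrow w
  have key : a • ((B v u * C v w - C v u * B v w) • A v + (C v u * A v w - A v u * C v w) • B v +
      (A v u * B v w - B v u * A v w) • C v) =
      (B v u * C v w - C v u * B v w) • (a • A v + b • B v + c • C v) +
      (a * (C v u * A v w - A v u * C v w) - b * (B v u * C v w - C v u * B v w)) • B v +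
      (a * (A v u * B v w - B v u * A v w) - c * (B v u * C v w - C v u * B v w)) • C v := by
    module
  rw [hv, z2, z3] at key
  simp only [smul_zero, zero_smul, add_zero, zero_add] at key
  exact (smul_eq_zero.mp key).resolve_left ha

lemma star (A B C : V →ₗ[ℂ] Module.Dual ℂ V)
    (hyp : ∀ v : V, ∃ a b c : ℂ, ¬(a = 0 ∧ b = 0 ∧ c = 0) ∧
      a • A v + b • B v + c • C v = 0) :
    ∀ v u w : V,
      (B v u * C v w - C v u * B v w) • A v + (C v u * A v w - A v u * C v w) • B v +
        (A v u * B v w - B v u * A v w) • C v = 0 := by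
  intro v u w
  obtain ⟨a, b, c, hne, hv⟩ := hyp v
  by_cases ha : a ≠ 0
  · exact star_aux A B C v u w a b c ha hv
  push_neg at ha
  by_cases hb : b ≠ 0
  · have := star_aux B C A v u w b c a hb (by linear_combination (norm := module) hv)
    linear_combination (norm := module) this
  push_neg at hb
  have hcc : c ≠ 0 := fun hcz => hne ⟨ha, hb, hcz⟩
  have := star_aux C A B v u w c a b hcc (by linear_combination (norm := module) hv)
  linear_combination (norm := module) this

lemma dep_scalar {x y : Module.Dual ℂ V} (hx : x ≠ 0)
    (h : ∀ z z', x z * y z' = x z' * y z) : ∃ α : ℂ, y = α • x := by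
  obtain ⟨z₀, hz₀⟩ : ∃ z₀, x z₀ ≠ 0 := by
    by_contra hcon; push_neg at hcon; exact hx (by ext v; simpa using hcon v)
  exact ⟨y z₀ / x z₀, smul_of_minors hz₀ h⟩

lemma exists_pt {x : Module.Dual ℂ V} (hx : x ≠ 0) : ∃ z, x z ≠ 0 := by
  by_contra hcon; push_neg at hcon; exact hx (by ext v; simpa using hcon v)

lemma map_ne_zero {M : V →ₗ[ℂ] Module.Dual ℂ V} (hM : M ≠ 0) : ∃ v z, M v z ≠ 0 := by
  by_contra hcon
  push_neg at hcon
  exact hM (by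
    apply LinearMap.ext; intro v; apply LinearMap.ext; intro z
    simpa using hcon v z)

set_option maxHeartbeats 1000000 in
lemma case0 [FiniteDimensional ℂ V] (X : Submodule ℂ (V →ₗ[ℂ] Module.Dual ℂ V))
    (hXdim : Module.finrank ℂ X = 3)
    (hXsym : ∀ M ∈ X, ∀ x y : V, M x y = M y x)
    (hdep : ∀ (v : V) (M N : V →ₗ[ℂ] Module.Dual ℂ V), M ∈ X → N ∈ X →
      ∀ z z', M v z * N v z' = M v z' * N v z) : False := by
  have hrank1 : ∀ M ∈ X, ∀ v w z z', M v z * M w z' = M v z' * M w z := by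
    intro M hMX
    by_contra hcon
    push_neg at hcon
    obtain ⟨v, w, z, z', hΔ⟩ := hcon
    have hind : LinearIndependent ℂ ![M v, M w] := indep_of_minor (sub_ne_zero.mpr hΔ)
    have hMv : M v ≠ 0 := by have := hind.ne_zero 0; simpa using this
    have hMw : M w ≠ 0 := by have := hind.ne_zero 1; simpa using this
    have hMne : M ≠ 0 := by
      intro h0; exact hMv (by rw [h0]; rfl)
    have hMvw : M v + M w ≠ 0 := by
      intro hvw
      have := Fintype.linearIndependent_iff.mp hind ![1, 1] (by
        rw [Fin.sum_univ_two]
        simp only [Matrix.cons_val_zero, Matrix.cons_val_one, Matrix.head_cons, one_smul]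
        exact hvw) 0
      simp at this
    have hXle : X ≤ Submodule.span ℂ {M} := by
      intro N hNX
      obtain ⟨α, hα⟩ := dep_scalar hMv (hdep v M N hMX hNX)
      obtain ⟨β', hβ'⟩ := dep_scalar hMw (hdep w M N hMX hNX)
      have hMvw' : M (v + w) ≠ 0 := by rw [map_add]; exact hMvw
      obtain ⟨γ', hγ'⟩ := dep_scalar hMvw' (hdep (v + w) M N hMX hNX)
      have hcomb : (α - γ') • M v + (β' - γ') • M w = 0 := by
        have h1 : γ' • (M v + M w) = α • M v + β' • M w := by
          rw [← hα, ← hβ', ← map_add, ← map_add, hγ']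
        linear_combination (norm := module) -h1
      have hαγ := Fintype.linearIndependent_iff.mp hind ![α - γ', β' - γ'] (by
        rw [Fin.sum_univ_two]
        simp only [Matrix.cons_val_zero, Matrix.cons_val_one, Matrix.head_cons]
        exact hcomb)
      have hα0 : α = γ' := by
        have h := hαγ 0
        simp only [Matrix.cons_val_zero] at h
        exact sub_eq_zero.mp h
      have hβ0 : β' = γ' := by
        have h := hαγ 1
        simp only [Matrix.cons_val_one, Matrix.head_cons] at h
        exact sub_eq_zero.mp h
      have hNX' : N - α • M ∈ X := X.sub_mem hNX (X.smul_mem α hMX)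
      have hN'v : (N - α • M) v = 0 := by
        simp only [LinearMap.sub_apply, LinearMap.smul_apply]
        rw [hα, sub_self]
      have hN'w : (N - α • M) w = 0 := by
        simp only [LinearMap.sub_apply, LinearMap.smul_apply]
        rw [hβ', hβ0, ← hα0, sub_self]
      have hv' : ∀ u₁ z₁ z₂, M v z₁ * (N - α • M) u₁ z₂ = M v z₂ * (N - α • M) u₁ z₁ := by
        intro u₁ z₁ z₂
        have h1 := hdep (v + u₁) M (N - α • M) hMX hNX' z₁ z₂
        have h2 := hdep u₁ M (N - α • M) hMX hNX' z₁ z₂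
        have hNvu : (N - α • M) (v + u₁) = (N - α • M) u₁ := by
          rw [map_add, hN'v, zero_add]
        rw [hNvu, map_add] at h1
        simp only [LinearMap.add_apply] at h1
        linear_combination h1 - h2
      have hw' : ∀ u₁ z₁ z₂, M w z₁ * (N - α • M) u₁ z₂ = M w z₂ * (N - α • M) u₁ z₁ := by
        intro u₁ z₁ z₂
        have h1 := hdep (w + u₁) M (N - α • M) hMX hNX' z₁ z₂
        have h2 := hdep u₁ M (N - α • M) hMX hNX' z₁ z₂
        have hNvu : (N - α • M) (w + u₁) = (N - α • M) u₁ := by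
          rw [map_add, hN'w, zero_add]
        rw [hNvu, map_add] at h1
        simp only [LinearMap.add_apply] at h1
        linear_combination h1 - h2
      have hN'0 : N - α • M = 0 := by
        apply LinearMap.ext; intro u₁; apply LinearMap.ext; intro z₁
        simp only [LinearMap.zero_apply]
        by_contra hne
        have hMveq : M v = (M v z₁ / (N - α • M) u₁ z₁) • (N - α • M) u₁ :=
          smul_of_minors hne (by intro za zb; linear_combination hv' u₁ zb za)
        have hMweq : M w = (M w z₁ / (N - α • M) u₁ z₁) • (N - α • M) u₁ :=
          smul_of_minors hne (by intro za zb; linear_combination hw' u₁ zb za)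
        have g1 : ∀ y', M v y' = M v z₁ / (N - α • M) u₁ z₁ * (N - α • M) u₁ y' := by
          intro y'
          conv_lhs => rw [hMveq]
          simp only [LinearMap.smul_apply, smul_eq_mul]
        have g2 : ∀ y', M w y' = M w z₁ / (N - α • M) u₁ z₁ * (N - α • M) u₁ y' := by
          intro y'
          conv_lhs => rw [hMweq]
          simp only [LinearMap.smul_apply, smul_eq_mul]
        exact hΔ (by rw [g1 z, g1 z', g2 z', g2 z]; ring)
      rw [Submodule.mem_span_singleton]
      refine ⟨α, ?_⟩
      rw [sub_eq_zero] at hN'0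
      rw [← hN'0]
    have h1 : Module.finrank ℂ X ≤ Module.finrank ℂ (Submodule.span ℂ {M}) :=
      Submodule.finrank_mono hXle
    rw [hXdim, finrank_span_singleton hMne] at h1
    omega
  have hfin0 : (0 : ℕ) < Module.finrank ℂ X := by rw [hXdim]; omega
  have hfin1 : (1 : ℕ) < Module.finrank ℂ X := by rw [hXdim]; omega
  haveI := Module.Free.of_divisionRing ℂ ↥X
  set bX : Basis (Fin (Module.finrank ℂ X)) ℂ X := Module.finBasis ℂ X with hbX
  set i0 : Fin (Module.finrank ℂ X) := ⟨0, hfin0⟩ with hi0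
  set i1 : Fin (Module.finrank ℂ X) := ⟨1, hfin1⟩ with hi1
  have hne01 : i0 ≠ i1 := by simp [hi0, hi1, Fin.ext_iff]
  set P : V →ₗ[ℂ] Module.Dual ℂ V := ((bX i0 : X) : V →ₗ[ℂ] Module.Dual ℂ V) with hP
  set Q : V →ₗ[ℂ] Module.Dual ℂ V := ((bX i1 : X) : V →ₗ[ℂ] Module.Dual ℂ V) with hQ
  have hPX : P ∈ X := (bX i0).2
  have hQX : Q ∈ X := (bX i1).2
  have hP0 : P ≠ 0 := by
    intro h
    exact bX.ne_zero i0 (by apply Subtype.ext; exact h)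
  have hQ0 : Q ≠ 0 := by
    intro h
    exact bX.ne_zero i1 (by apply Subtype.ext; exact h)
  have hQP : ∀ c : ℂ, Q ≠ c • P := by
    intro c hQPc
    have hsub : bX i1 = c • bX i0 := by
      apply Subtype.ext
      rw [Submodule.coe_smul]
      exact hQPc
    have h5 : bX.repr (bX i1) i1 = 1 := by simp
    rw [hsub, map_smul] at h5
    simp only [Basis.repr_self, Finsupp.smul_single, smul_eq_mul, mul_one] at h5
    rw [Finsupp.single_apply_eq_zero.mpr (fun h => absurd h.symm hne01)] at h5
    exact one_ne_zero h5.symm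
  clear_value P Q
  clear hbX hi0 hi1
  have hP1 := hrank1 P hPX
  have hQ1 := hrank1 Q hQX
  obtain ⟨v, z, hPvz⟩ := map_ne_zero hP0
  obtain ⟨w, y, hQwy⟩ := map_ne_zero hQ0
  have hQw : Q w ≠ 0 := fun h => hQwy (by rw [h]; rfl)
  obtain ⟨u, z₁, hPuz, hQune⟩ : ∃ u z₁, P u z₁ ≠ 0 ∧ Q u ≠ 0 := by
    by_cases h1 : Q v = 0
    · by_cases h2 : P w = 0
      · refine ⟨v + w, z, ?_, ?_⟩
        · rw [map_add]
          simp only [LinearMap.add_apply]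
          rw [h2]
          simpa using hPvz
        · rw [map_add, h1, zero_add]
          exact hQw
      · obtain ⟨z₂, hz₂⟩ := exists_pt h2
        exact ⟨w, z₂, hz₂, hQw⟩
    · exact ⟨v, z, hPvz, h1⟩
  have hdepu := hdep u P Q hPX hQX
  have hQueq : Q u = (Q u z₁ / P u z₁) • P u := smul_of_minors hPuz hdepu
  have hlam : Q u z₁ / P u z₁ ≠ 0 := fun h => hQune (by rw [hQueq, h, zero_smul])
  have hQuz₁ne : Q u z₁ ≠ 0 := by
    intro h; rw [h, zero_div] at hlam; exact hlam rfl
  have hPexp : ∀ w₁, P w₁ = (P w₁ z₁ / P u z₁) • P u := fun w₁ =>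
    smul_of_minors hPuz (fun za zb => hP1 u w₁ za zb)
  have hQexp : ∀ w₁, Q w₁ = (Q w₁ z₁ / Q u z₁) • Q u := fun w₁ =>
    smul_of_minors hQuz₁ne (fun za zb => hQ1 u w₁ za zb)
  have hPz₁ : P z₁ z₁ ≠ 0 := by
    intro h0
    have h6 : P u z₁ = P z₁ u := hXsym P hPX u z₁
    have h7 : P z₁ u = P z₁ z₁ / P u z₁ * P u u := by
      conv_lhs => rw [hPexp z₁]
      simp [smul_eq_mul]
    rw [h0, zero_div, zero_mul] at h7
    exact hPuz (by rw [h6, h7])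
  apply hQP (Q z₁ z₁ / P z₁ z₁)
  apply LinearMap.ext; intro w₁; apply LinearMap.ext; intro y₁
  simp only [LinearMap.smul_apply, smul_eq_mul]
  have f1 : Q w₁ y₁ = Q w₁ z₁ / Q u z₁ * Q u y₁ := by
    conv_lhs => rw [hQexp w₁]
    simp only [LinearMap.smul_apply, smul_eq_mul]
  have f3 : Q w₁ z₁ = Q z₁ z₁ / Q u z₁ * Q u w₁ := by
    rw [hXsym Q hQX w₁ z₁]
    conv_lhs => rw [hQexp z₁]
    simp only [LinearMap.smul_apply, smul_eq_mul]
  have f4 : P w₁ y₁ = P w₁ z₁ / P u z₁ * P u y₁ := by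
    conv_lhs => rw [hPexp w₁]
    simp only [LinearMap.smul_apply, smul_eq_mul]
  have f6 : P w₁ z₁ = P z₁ z₁ / P u z₁ * P u w₁ := by
    rw [hXsym P hPX w₁ z₁]
    conv_lhs => rw [hPexp z₁]
    simp only [LinearMap.smul_apply, smul_eq_mul]
  have f7 : Q u y₁ = Q u z₁ / P u z₁ * P u y₁ := by
    conv_lhs => rw [hQueq]
    simp only [LinearMap.smul_apply, smul_eq_mul]
  have f8 : Q u w₁ = Q u z₁ / P u z₁ * P u w₁ := by
    conv_lhs => rw [hQueq]
    simp only [LinearMap.smul_apply, smul_eq_mul]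
  rw [f1, f3, f4, f6, f7, f8]
  field_simp

lemma endgame (X : Submodule ℂ (V →ₗ[ℂ] Module.Dual ℂ V)) (U : Submodule ℂ (Module.Dual ℂ V))
    (A N P : V →ₗ[ℂ] Module.Dual ℂ V) (δ : Module.Dual ℂ V) (μ : ℂ)
    (hμ : μ ≠ 0) (hδ : δ ≠ 0)
    (hA : ∀ v, A v = (μ * δ v) • δ)
    (hNU : ∀ v, N v ∈ U) (hδU : δ ∈ U)
    (hAN : ∀ c : ℂ, N ≠ c • A)
    (hsymN : ∀ x y, N x y = N y x)
    (hspan : ∀ M ∈ X, ∃ a b c : ℂ, M = a • A + b • N + c • P)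
    (hev : ∀ v, ∃ M ∈ X, M ≠ 0 ∧ M v = 0) :
    ∀ v, P v ∈ U := by
  by_contra hcon
  push_neg at hcon
  obtain ⟨vh, hvh⟩ := hcon
  have claim1 : ∀ v, P v ∉ U → ∀ z z', δ v * δ z * N v z' = δ v * δ z' * N v z := by
    intro v hvD z z'
    obtain ⟨M, hMX, hM0, hMv⟩ := hev v
    obtain ⟨a, b, c, hM⟩ := hspan M hMX
    have hMveq : a • A v + b • N v + c • P v = 0 := by
      rw [hM] at hMv
      simpa only [LinearMap.add_apply, LinearMap.smul_apply] using hMv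
    have hAvU : A v ∈ U := by rw [hA v]; exact U.smul_mem _ hδU
    have hcz : c = 0 := by
      by_contra hcc
      apply hvD
      have h1 : c • P v = -(a • A v) - b • N v := by
        linear_combination (norm := module) hMveq
      have h2 : P v = c⁻¹ • (-(a • A v) - b • N v) := by
        rw [← h1, smul_smul, inv_mul_cancel₀ hcc, one_smul]
      rw [h2]
      exact U.smul_mem _ (Submodule.sub_mem _ (Submodule.neg_mem _ (U.smul_mem _ hAvU))
        (U.smul_mem _ (hNU v)))
    rw [hcz, zero_smul, add_zero] at hMveq
    by_cases hbz : b = 0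
    · have haz : a ≠ 0 := by
        intro haz; apply hM0; rw [hM, hcz, hbz, haz]; simp
      rw [hbz, zero_smul, add_zero] at hMveq
      have hAv0 : A v = 0 := by
        have h3 := congrArg (fun f => a⁻¹ • f) hMveq
        simpa [smul_smul, inv_mul_cancel₀ haz] using h3
      have hδv : δ v = 0 := by
        rw [hA v] at hAv0
        rcases smul_eq_zero.mp hAv0 with h | h
        · rcases mul_eq_zero.mp h with h' | h'
          · exact absurd h' hμ
          · exact h'
        · exact absurd h hδ
      rw [hδv]; ring
    · have hNv : N v = (b⁻¹ * -(a * μ * δ v)) • δ := by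
        have h1 : b • N v = (-(a * μ * δ v)) • δ := by
          rw [hA v] at hMveq
          linear_combination (norm := module) hMveq
        have h2 := congrArg (fun f => b⁻¹ • f) h1
        simpa [smul_smul, inv_mul_cancel₀ hbz] using h2
      rw [hNv]
      simp only [LinearMap.smul_apply, smul_eq_mul]
      ring
  have claim2 : ∀ v z z', δ v * δ z * N v z' = δ v * δ z' * N v z := by
    intro v z z'
    have hone : ∀ t₁ t₂ : ℂ, P (v + t₁ • vh) ∈ U → P (v + t₂ • vh) ∈ U → t₁ = t₂ := by
      intro t₁ t₂ h1 h2
      by_contra hne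
      apply hvh
      have hdiff : ((t₁ - t₂) • P vh : Module.Dual ℂ V) ∈ U := by
        have he : P (v + t₁ • vh) - P (v + t₂ • vh) = (t₁ - t₂) • P vh := by
          simp only [map_add, map_smul]; module
        rw [← he]; exact Submodule.sub_mem _ h1 h2
      have h3 := U.smul_mem (t₁ - t₂)⁻¹ hdiff
      rwa [smul_smul, inv_mul_cancel₀ (sub_ne_zero.mpr hne), one_smul] at h3
    by_cases hex : ∃ t : ℂ, P (v + t • vh) ∈ U
    case neg =>
      push_neg at hex
      have hq : ∀ t : ℂ, t ≠ 37 →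
          (δ v * δ z * N v z' - δ v * δ z' * N v z) +
          t * (δ vh * δ z * N v z' + δ v * δ z * N vh z'
               - δ vh * δ z' * N v z - δ v * δ z' * N vh z) +
          t ^ 2 * (δ vh * δ z * N vh z' - δ vh * δ z' * N vh z) = 0 := by
        intro t _
        have hw := claim1 (v + t • vh) (hex t) z z'
        simp only [map_add, map_smul, LinearMap.add_apply, LinearMap.smul_apply,
          smul_eq_mul] at hw
        linear_combination hw
      have := quad_vanish_off 37 hq
      linear_combination this
    case pos =>
      obtain ⟨t₀, ht₀⟩ := hex
      have hq : ∀ t : ℂ, t ≠ t₀ →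
          (δ v * δ z * N v z' - δ v * δ z' * N v z) +
          t * (δ vh * δ z * N v z' + δ v * δ z * N vh z'
               - δ vh * δ z' * N v z - δ v * δ z' * N vh z) +
          t ^ 2 * (δ vh * δ z * N vh z' - δ vh * δ z' * N vh z) = 0 := by
        intro t ht
        have hnot : P (v + t • vh) ∉ U := fun hmem => ht (hone t t₀ hmem ht₀)
        have hw := claim1 (v + t • vh) hnot z z'
        simp only [map_add, map_smul, LinearMap.add_apply, LinearMap.smul_apply,
          smul_eq_mul] at hw
        linear_combination hw
      have := quad_vanish_off t₀ hq
      linear_combination this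
  obtain ⟨vb, hvb⟩ := exists_pt hδ
  have hNspan : ∀ v, N v ∈ Submodule.span ℂ {δ} := by
    have hstep : ∀ v, δ v ≠ 0 → N v ∈ Submodule.span ℂ {δ} := by
      intro v hδv
      have h1 : N v = (N v vb / δ vb) • δ := by
        apply LinearMap.ext; intro zz
        have h2 := claim2 v zz vb
        have h3 : δ v * (N v zz * δ vb - N v vb * δ zz) = 0 := by linear_combination -h2
        have h4 : N v zz * δ vb - N v vb * δ zz = 0 := by
          rcases mul_eq_zero.mp h3 with h | h
          · exact absurd h hδv
          · exact h
        simp only [LinearMap.smul_apply, smul_eq_mul]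
        field_simp
        linear_combination h4
      rw [h1]
      exact Submodule.smul_mem _ _ (Submodule.mem_span_singleton_self δ)
    intro v
    by_cases hδv : δ v = 0
    · have h1 := hstep (v + vb) (by rw [map_add, hδv, zero_add]; exact hvb)
      have h2 := hstep vb hvb
      have h3 : N v = N (v + vb) - N vb := by rw [map_add]; abel
      rw [h3]
      exact Submodule.sub_mem _ h1 h2
    · exact hstep v hδv
  obtain ⟨cb, hcb⟩ := Submodule.mem_span_singleton.mp (hNspan vb)
  apply hAN (cb / (δ vb * μ))
  apply LinearMap.ext; intro v; apply LinearMap.ext; intro zz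
  obtain ⟨cv, hcv⟩ := Submodule.mem_span_singleton.mp (hNspan v)
  have e1 : N v vb = cv * δ vb := by rw [← hcv]; simp [smul_eq_mul]
  have e2 : N vb v = cb * δ v := by rw [← hcb]; simp [smul_eq_mul]
  have h5 : cv * δ vb = cb * δ v := by rw [← e1, ← e2]; exact hsymN v vb
  have e3 : N v zz = cv * δ zz := by rw [← hcv]; simp [smul_eq_mul]
  rw [e3]
  simp only [LinearMap.smul_apply, smul_eq_mul]
  rw [hA v]
  simp only [LinearMap.smul_apply, smul_eq_mul]
  field_simp
  linear_combination δ zz * h5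

end OKS


/-- The subspace `W^⊥ ⊆ S(V,V*)` of symmetric linear maps `V → V*` vanishing on the
subspace `W ⊆ V` (i.e. those `M` with `W ⊆ ker M`). -/
noncomputable def symPerp {V : Type*} [AddCommGroup V] [Module ℂ V] (W : Submodule ℂ V) :
    Submodule ℂ (V →ₗ[ℂ] Module.Dual ℂ V) where
  carrier := {M | (∀ x y : V, M x y = M y x) ∧ ∀ w ∈ W, M w = 0}
  add_mem' := fun {a b} ha hb =>
    ⟨fun x y => by simp only [LinearMap.add_apply, ha.1 x y, hb.1 x y],
     fun w hw => by simp only [LinearMap.add_apply, ha.2 w hw, hb.2 w hw, add_zero]⟩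
  zero_mem' := ⟨fun x y => rfl, fun w hw => rfl⟩
  smul_mem' := fun c a ha =>
    ⟨fun x y => by simp only [LinearMap.smul_apply, ha.1 x y],
     fun w hw => by simp only [LinearMap.smul_apply, ha.2 w hw, smul_zero]⟩

set_option maxHeartbeats 2000000 in
/-- **Proposition 4.6.** Let `V` be a complex vector space of dimension `g ≥ 3` and
`X ⊆ S(V,V*)` a 3-dimensional linear subspace such that for every `v ∈ V` the evaluation
map `e_v : X → V*` fails to be injective. Then `X = W^⊥` for some linear subspace
`W ⊆ V` of dimension `g - 2`. -/
theorem oort_keel_sadun_prop_4_6 {V : Type*} [AddCommGroup V] [Module ℂ V]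
    [FiniteDimensional ℂ V] (g : ℕ) (hg : 3 ≤ g) (hVg : Module.finrank ℂ V = g)
    (X : Submodule ℂ (V →ₗ[ℂ] Module.Dual ℂ V))
    (hXsym : ∀ M ∈ X, ∀ x y : V, M x y = M y x)
    (hXdim : Module.finrank ℂ X = 3)
    (heval : ∀ v : V, ¬ Function.Injective fun N : X => (N : V →ₗ[ℂ] Module.Dual ℂ V) v) :
    ∃ W : Submodule ℂ V, Module.finrank ℂ W = g - 2 ∧ X = symPerp W := by
  classical
  have hev : ∀ v : V, ∃ M ∈ X, M ≠ 0 ∧ M v = 0 := by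
    intro v
    have h := heval v
    rw [Function.not_injective_iff] at h
    obtain ⟨M₁, M₂, he, hne⟩ := h
    refine ⟨(M₁ : V →ₗ[ℂ] Module.Dual ℂ V) - (M₂ : V →ₗ[ℂ] Module.Dual ℂ V),
      X.sub_mem M₁.2 M₂.2, ?_, ?_⟩
    · intro h0
      apply hne
      apply Subtype.ext
      rwa [sub_eq_zero] at h0
    · have h1 : (M₁ : V →ₗ[ℂ] Module.Dual ℂ V) v = (M₂ : V →ₗ[ℂ] Module.Dual ℂ V) v := he
      simp only [LinearMap.sub_apply]
      rw [h1, sub_self]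
  by_cases hcase : ∃ (v₀ : V) (B C : V →ₗ[ℂ] Module.Dual ℂ V), B ∈ X ∧ C ∈ X ∧
      LinearIndependent ℂ ![B v₀, C v₀]
  swap
  · push_neg at hcase
    exact (OKS.case0 X hXdim hXsym (fun v M N hM hN =>
      OKS.dep_of_not_indep (hcase v M N hM hN))).elim
  obtain ⟨v₀, B, C, hBX, hCX, hBC⟩ := hcase
  obtain ⟨A, hAX, hA0, hAv₀⟩ := hev v₀
  obtain ⟨u, w, hu1, hu2, hw1, hw2⟩ := OKS.exists_dual_pair hBC
  have hsymA := hXsym A hAX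
  have hsymB := hXsym B hBX
  have hsymC := hXsym C hCX
  have hABC : LinearIndependent ℂ ![A, B, C] := by
    rw [Fintype.linearIndependent_iff]
    intro g' hg'
    rw [Fin.sum_univ_three] at hg'
    simp only [Matrix.cons_val_zero, Matrix.cons_val_one, Matrix.head_cons,
      Matrix.cons_val_two, Matrix.tail_cons] at hg'
    have hg'' := DFunLike.congr_fun hg' v₀
    simp only [LinearMap.add_apply, LinearMap.smul_apply, LinearMap.zero_apply,
      hAv₀, smul_zero, zero_add] at hg''
    have h12 := Fintype.linearIndependent_iff.mp hBC ![g' 1, g' 2] (by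
      rw [Fin.sum_univ_two]
      simp only [Matrix.cons_val_zero, Matrix.cons_val_one, Matrix.head_cons]
      exact hg'')
    have hg1 : g' 1 = 0 := by simpa using h12 0
    have hg2 : g' 2 = 0 := by simpa using h12 1
    have hg0 : g' 0 = 0 := by
      rw [hg1, hg2] at hg'
      simp only [zero_smul, add_zero] at hg'
      rcases smul_eq_zero.mp hg' with h | h
      · exact h
      · exact absurd h hA0
    intro i; fin_cases i <;> assumption
  have hspan : Submodule.span ℂ (Set.range ![A, B, C]) = X := by
    apply Submodule.eq_of_le_of_finrank_le
    · rw [Submodule.span_le]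
      rintro f ⟨i, rfl⟩
      fin_cases i
      · exact hAX
      · exact hBX
      · exact hCX
    · rw [finrank_span_eq_card hABC, hXdim]
      simp
  have hcoords : ∀ M ∈ X, ∃ a b c : ℂ, M = a • A + b • B + c • C := by
    intro M hM
    have hM' : M ∈ Submodule.span ℂ (Set.range ![A, B, C]) := by rw [hspan]; exact hM
    rw [Submodule.mem_span_range_iff_exists_fun] at hM'
    obtain ⟨f, hf⟩ := hM'
    refine ⟨f 0, f 1, f 2, ?_⟩
    rw [← hf, Fin.sum_univ_three]
    simp only [Matrix.cons_val_zero, Matrix.cons_val_one, Matrix.head_cons,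
      Matrix.cons_val_two, Matrix.tail_cons]
  have hyp3 : ∀ v : V, ∃ a b c : ℂ, ¬(a = 0 ∧ b = 0 ∧ c = 0) ∧
      a • A v + b • B v + c • C v = 0 := by
    intro v
    obtain ⟨M, hMX, hM0, hMv⟩ := hev v
    obtain ⟨a, b, c, hM⟩ := hcoords M hMX
    refine ⟨a, b, c, ?_, ?_⟩
    · rintro ⟨ha, hb, hc⟩
      apply hM0; rw [hM, ha, hb, hc]; simp
    · rw [hM] at hMv
      simpa only [LinearMap.add_apply, LinearMap.smul_apply] using hMv
  have hstar := OKS.star A B C hyp3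
  have key : ∀ x : V,
      A x = (A x u) • B v₀ + (A x w) • C v₀ ∧
      (A x u) • B x + (A x w) • C x =
        (B x u + C x w) • A x + (C x u * A x w - A x u * C x w) • B v₀ +
        (A x u * B x w - B x u * A x w) • C v₀ := by
    intro x
    have hT : ∀ t : ℂ,
        t • (A x - (A x u) • B v₀ - (A x w) • C v₀) +
        t ^ 2 • ((B x u + C x w) • A x + (C x u * A x w - A x u * C x w) • B v₀
          - (A x u) • B x + (A x u * B x w - B x u * A x w) • C v₀ - (A x w) • C x) +
        t ^ 3 • ((B x u * C x w - C x u * B x w) • A x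
          + (C x u * A x w - A x u * C x w) • B x
          + (A x u * B x w - B x u * A x w) • C x) = 0 := by
      intro t
      have h := hstar (v₀ + t • x) u w
      simp only [map_add, map_smul, LinearMap.add_apply, LinearMap.smul_apply, smul_eq_mul,
        hAv₀, LinearMap.zero_apply, hu1, hu2, hw1, hw2, zero_add, add_zero, mul_zero,
        zero_mul, mul_one, smul_zero] at h
      linear_combination (norm := module) h
    obtain ⟨h1, h2, _⟩ := OKS.poly3 hT
    constructor
    · linear_combination (norm := module) h1
    · linear_combination (norm := module) -h2
  have hAy : ∀ x, A x = (A x u) • B v₀ + (A x w) • C v₀ := fun x => (key x).1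
  set U : Submodule ℂ (Module.Dual ℂ V) := Submodule.span ℂ {B v₀, C v₀} with hUdef
  have hβU : B v₀ ∈ U := Submodule.mem_span_pair.mpr ⟨1, 0, by simp⟩
  have hγU : C v₀ ∈ U := Submodule.mem_span_pair.mpr ⟨0, 1, by simp⟩
  have hIU : ∀ x, A x ∈ U := fun x => by
    rw [hAy x]; exact U.add_mem (U.smul_mem _ hβU) (U.smul_mem _ hγU)
  have hIIU : ∀ x, (A x u) • B x + (A x w) • C x ∈ U := by
    intro x
    rw [(key x).2]
    exact U.add_mem (U.add_mem (U.smul_mem _ (hIU x)) (U.smul_mem _ hβU)) (U.smul_mem _ hγU)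
  suffices hfin : (∀ v, B v ∈ U) ∧ (∀ v, C v ∈ U) by
    obtain ⟨hBU, hCU⟩ := hfin
    have hMU : ∀ M ∈ X, ∀ v, M v ∈ U := by
      intro M hM v
      obtain ⟨a, b, c, hMc⟩ := hcoords M hM
      rw [hMc]
      simp only [LinearMap.add_apply, LinearMap.smul_apply]
      exact U.add_mem (U.add_mem (U.smul_mem _ (hIU v)) (U.smul_mem _ (hBU v)))
        (U.smul_mem _ (hCU v))
    have hU2 : Module.finrank ℂ U = 2 := by
      have hrange : ({B v₀, C v₀} : Set (Module.Dual ℂ V)) = Set.range ![B v₀, C v₀] := by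
        ext f
        constructor
        · rintro (rfl | rfl)
          · exact ⟨0, rfl⟩
          · exact ⟨1, rfl⟩
        · rintro ⟨i, rfl⟩
          fin_cases i
          · exact Or.inl rfl
          · exact Or.inr rfl
      rw [hUdef, hrange, finrank_span_eq_card hBC]
      simp
    have hWdim : Module.finrank ℂ U.dualCoannihilator = g - 2 := by
      have hh := Subspace.finrank_add_finrank_dualCoannihilator_eq U
      rw [hU2, hVg] at hh
      omega
    have hWdec : ∀ x : V, x - (B v₀ x) • u - (C v₀ x) • w ∈ U.dualCoannihilator := by
      intro x
      rw [Submodule.mem_dualCoannihilator]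
      intro φ hφ
      obtain ⟨a, b, hab⟩ := Submodule.mem_span_pair.mp hφ
      rw [← hab]
      simp only [LinearMap.add_apply, LinearMap.smul_apply, map_sub, map_smul, smul_eq_mul,
        hu1, hu2, hw1, hw2]
      ring
    have hle : X ≤ symPerp U.dualCoannihilator := by
      intro M hM
      refine ⟨hXsym M hM, ?_⟩
      intro w' hw'
      apply LinearMap.ext; intro z
      rw [LinearMap.zero_apply, hXsym M hM w' z]
      exact (Submodule.mem_dualCoannihilator w').mp hw' (M z) (hMU M hM z)
    have hge : Module.finrank ℂ (symPerp U.dualCoannihilator) ≤ 3 := by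
      let L : (symPerp U.dualCoannihilator : Submodule ℂ (V →ₗ[ℂ] Module.Dual ℂ V))
          →ₗ[ℂ] (Fin 3 → ℂ) :=
        { toFun := fun M => ![M.1 u u, M.1 u w, M.1 w w],
          map_add' := fun M₁ M₂ => by
            funext i; fin_cases i <;> simp [LinearMap.add_apply]
          map_smul' := fun cc M₁ => by
            funext i; fin_cases i <;> simp [LinearMap.smul_apply] }
      have hker0 : ∀ M : ↥(symPerp U.dualCoannihilator), L M = 0 → M = 0 := by
        intro M hM0
        have hc0 : M.1 u u = 0 := by
          have := congrFun hM0 0; simpa [L] using this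
        have hc1 : M.1 u w = 0 := by
          have := congrFun hM0 1; simpa [L] using this
        have hc2 : M.1 w w = 0 := by
          have := congrFun hM0 2; simpa [L] using this
        obtain ⟨hsymM, hvanM⟩ := M.2
        apply Subtype.ext
        apply LinearMap.ext; intro x; apply LinearMap.ext; intro z
        simp only [ZeroMemClass.coe_zero, LinearMap.zero_apply]
        have hMuz : M.1 u z = 0 := by
          have h0 : M.1 (z - (B v₀ z) • u - (C v₀ z) • w) = 0 := hvanM _ (hWdec z)
          have h0' : M.1 u (z - (B v₀ z) • u - (C v₀ z) • w) = 0 := by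
            rw [hsymM u (z - (B v₀ z) • u - (C v₀ z) • w), h0]
            rfl
          rw [map_sub, map_sub, map_smul, map_smul] at h0'
          simp only [smul_eq_mul, hc0, hc1, mul_zero, sub_zero] at h0'
          exact h0'
        have hMwz : M.1 w z = 0 := by
          have h0 : M.1 (z - (B v₀ z) • u - (C v₀ z) • w) = 0 := hvanM _ (hWdec z)
          have h0' : M.1 w (z - (B v₀ z) • u - (C v₀ z) • w) = 0 := by
            rw [hsymM w (z - (B v₀ z) • u - (C v₀ z) • w), h0]
            rfl
          rw [map_sub, map_sub, map_smul, map_smul] at h0'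
          have hwu : M.1 w u = 0 := by rw [← hsymM u w]; exact hc1
          simp only [smul_eq_mul, hwu, hc2, mul_zero, sub_zero] at h0'
          exact h0'
        have hMx : M.1 x = (B v₀ x) • M.1 u + (C v₀ x) • M.1 w := by
          have h0 : M.1 (x - (B v₀ x) • u - (C v₀ x) • w) = 0 := hvanM _ (hWdec x)
          rw [map_sub, map_sub, map_smul, map_smul] at h0
          linear_combination (norm := module) h0
        rw [hMx]
        simp only [LinearMap.add_apply, LinearMap.smul_apply, smul_eq_mul, hMuz, hMwz]
        ring
      have hinj : Function.Injective L := by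
        intro M₁ M₂ h12
        have h0 : M₁ - M₂ = 0 := hker0 _ (by rw [show L (M₁ - M₂) = L M₁ - L M₂ from map_sub L M₁ M₂, h12, sub_self])
        rw [← sub_eq_zero]; exact h0
      calc Module.finrank ℂ (symPerp U.dualCoannihilator)
          ≤ Module.finrank ℂ (Fin 3 → ℂ) := LinearMap.finrank_le_finrank_of_injective hinj
        _ = 3 := Module.finrank_fin_fun ℂ
    refine ⟨U.dualCoannihilator, hWdim, ?_⟩
    exact Submodule.eq_of_le_of_finrank_le hle (by rw [hXdim]; exact hge)
  by_cases hAuw : LinearIndependent ℂ ![A u, A w]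
  · -- rank-2 case
    obtain ⟨p, q, hup, hwp, huq, hwq⟩ := OKS.exists_dual_pair hAuw
    have hApu : A p u = 1 := by rw [hsymA p u]; exact hup
    have hApw : A p w = 0 := by rw [hsymA p w]; exact hwp
    have hAqu : A q u = 0 := by rw [hsymA q u]; exact huq
    have hAqw : A q w = 1 := by rw [hsymA q w]; exact hwq
    have hBp : B p ∈ U := by
      have h := hIIU p
      rw [hApu, hApw] at h
      simpa using h
    have hCq : C q ∈ U := by
      have h := hIIU q
      rw [hAqu, hAqw] at h
      simpa using h
    have hPol : ∀ x y, (A x u) • B y + (A y u) • B x + (A x w) • C y + (A y w) • C x ∈ U := by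
      intro x y
      have h := U.sub_mem (U.sub_mem (hIIU (x + y)) (hIIU x)) (hIIU y)
      have e : (A (x + y) u) • B (x + y) + (A (x + y) w) • C (x + y)
          - ((A x u) • B x + (A x w) • C x) - ((A y u) • B y + (A y w) • C y)
          = (A x u) • B y + (A y u) • B x + (A x w) • C y + (A y w) • C x := by
        simp only [map_add, LinearMap.add_apply]
        module
      rwa [e] at h
    have hBy : ∀ y, B y + (A y w) • C p ∈ U := by
      intro y
      have h := hPol p y
      rw [hApu, hApw] at h
      have h2 := U.sub_mem h (U.smul_mem (A y u) hBp)
      have e : (1 : ℂ) • B y + (A y u) • B p + (0 : ℂ) • C y + (A y w) • C p - (A y u) • B p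
          = B y + (A y w) • C p := by module
      rwa [e] at h2
    have hCy : ∀ y, C y + (A y u) • B q ∈ U := by
      intro y
      have h := hPol q y
      rw [hAqu, hAqw] at h
      have h2 := U.sub_mem h (U.smul_mem (A y w) hCq)
      have e : (0 : ℂ) • B y + (A y u) • B q + (1 : ℂ) • C y + (A y w) • C q - (A y w) • C q
          = C y + (A y u) • B q := by module
      rwa [e] at h2
    have hBqCp : B q + C p ∈ U := by
      have h := hBy q
      rwa [hAqw, one_smul] at h
    by_cases hxi : B q ∈ U
    · have hCp : C p ∈ U := by
        have h := U.sub_mem hBqCp hxi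
        have e : B q + C p - B q = C p := by module
        rwa [e] at h
      constructor
      · intro y
        have h := U.sub_mem (hBy y) (U.smul_mem (A y w) hCp)
        have e : B y + (A y w) • C p - (A y w) • C p = B y := by module
        rwa [e] at h
      · intro y
        have h := U.sub_mem (hCy y) (U.smul_mem (A y u) hxi)
        have e : C y + (A y u) • B q - (A y u) • B q = C y := by module
        rwa [e] at h
    · exfalso
      have htri : LinearIndependent ℂ ![B q, B v₀, C v₀] :=
        OKS.triple_indep hBC (fun a b hab => hxi (by
          rw [hab]; exact Submodule.mem_span_pair.mpr ⟨a, b, rfl⟩))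
      obtain ⟨zh, hz1, hz2, hz3⟩ := OKS.exists_dual_triple htri
      have hUz : ∀ φ ∈ U, φ zh = 0 := by
        intro φ hφ
        obtain ⟨a, b, hab⟩ := Submodule.mem_span_pair.mp hφ
        rw [← hab]
        simp [hz2, hz3]
      have hker : ∀ zz, B v₀ zz = 0 → C v₀ zz = 0 → A zz = 0 := by
        intro zz h1 h2
        apply LinearMap.ext; intro y
        rw [LinearMap.zero_apply, hsymA zz y, hAy y]
        simp [h1, h2]
      obtain ⟨s₁, s₂, hAu⟩ := OKS.span_pair_of_vanish hBC (fun zz h1 h2 => by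
        rw [show (A u) zz = A zz u from hsymA u zz, hker zz h1 h2]; rfl)
      obtain ⟨s₃, s₄, hAw⟩ := OKS.span_pair_of_vanish hBC (fun zz h1 h2 => by
        rw [show (A w) zz = A zz w from hsymA w zz, hker zz h1 h2]; rfl)
      have hs23 : s₂ = s₃ := by
        have e1 : A u w = s₂ := by
          rw [show A u w = (A u) w from rfl, hAu]
          simp only [LinearMap.add_apply, LinearMap.smul_apply, smul_eq_mul, hw1, hw2]
          ring
        have e2 : A w u = s₃ := by
          rw [show A w u = (A w) u from rfl, hAw]
          simp only [LinearMap.add_apply, LinearMap.smul_apply, smul_eq_mul, hu1, hu2]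
          ring
        rw [← e1, ← e2, hsymA u w]
      have hAz : A zh = 0 := hker zh hz2 hz3
      have hAp : A p = B v₀ := by
        rw [hAy p, hApu, hApw]
        simp
      have hAq : A q = C v₀ := by
        rw [hAy q, hAqu, hAqw]
        simp
      have hBzeq : B zh = A w := by
        apply LinearMap.ext; intro y
        have hmem : B y - (A y w) • B q ∈ U := by
          have h := U.sub_mem (hBy y) (U.smul_mem (A y w) hBqCp)
          have e : B y + (A y w) • C p - (A y w) • (B q + C p) = B y - (A y w) • B q := by
            module
          rwa [e] at h
        have h9 := hUz _ hmem
        simp only [LinearMap.sub_apply, LinearMap.smul_apply, smul_eq_mul, hz1, mul_one] at h9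
        rw [show (B zh) y = B y zh from hsymB zh y,
          show (A w) y = A y w from (hsymA y w).symm]
        linear_combination h9
      have hCzeq : C zh = -(A u) := by
        apply LinearMap.ext; intro y
        have h9 := hUz _ (hCy y)
        simp only [LinearMap.add_apply, LinearMap.smul_apply, smul_eq_mul, hz1, mul_one] at h9
        rw [show (C zh) y = C y zh from hsymC zh y, LinearMap.neg_apply,
          show (A u) y = A y u from (hsymA y u).symm]
        linear_combination h9
      obtain ⟨e₁, e₂, hCqrep⟩ := Submodule.mem_span_pair.mp hCq
      obtain ⟨b₁, b₂, hBprep⟩ := Submodule.mem_span_pair.mp hBp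
      obtain ⟨c₁, c₂, hCprep'⟩ := Submodule.mem_span_pair.mp hBqCp
      have hCprep : C p = c₁ • B v₀ + c₂ • C v₀ - B q := by
        linear_combination (norm := module) -hCprep'
      have probe : ∀ (v : V) (x1 x2 x3 y1 y2 y3 z1 z2 z3 : ℂ),
          A v = x1 • B q + x2 • B v₀ + x3 • C v₀ →
          B v = y1 • B q + y2 • B v₀ + y3 • C v₀ →
          C v = z1 • B q + z2 • B v₀ + z3 • C v₀ →
          ∃ a b c : ℂ, ¬(a = 0 ∧ b = 0 ∧ c = 0) ∧
            a * x1 + b * y1 + c * z1 = 0 ∧ a * x2 + b * y2 + c * z2 = 0 ∧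
            a * x3 + b * y3 + c * z3 = 0 := by
        intro v x1 x2 x3 y1 y2 y3 z1 z2 z3 hAv hBv hCv
        obtain ⟨a, b, c, hne, hvv⟩ := hyp3 v
        have hcomb : (a * x1 + b * y1 + c * z1) • B q + (a * x2 + b * y2 + c * z2) • B v₀ +
            (a * x3 + b * y3 + c * z3) • C v₀ = 0 := by
          rw [← hvv, hAv, hBv, hCv]
          module
        have h3 := Fintype.linearIndependent_iff.mp htri
          ![a * x1 + b * y1 + c * z1, a * x2 + b * y2 + c * z2, a * x3 + b * y3 + c * z3] (by
            rw [Fin.sum_univ_three]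
            simp only [Matrix.cons_val_zero, Matrix.cons_val_one, Matrix.head_cons,
              Matrix.cons_val_two, Matrix.tail_cons]
            exact hcomb)
        exact ⟨a, b, c, hne, by simpa using h3 0, by simpa using h3 1, by simpa using h3 2⟩
      have hProbe1 : ∀ s : ℂ, s ≠ 0 → -s₁ + s * e₁ = 0 := by
        intro s hs
        obtain ⟨a, b, c, hne, E1, E2, E3⟩ := probe (zh + s • q)
          0 0 s s s₃ s₄ 0 (-s₁ + s * e₁) (-s₂ + s * e₂)
          (by rw [map_add, map_smul, hAz, hAq]; module)
          (by rw [map_add, map_smul, hBzeq, hAw]; module)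
          (by rw [map_add, map_smul, hCzeq, hAu, ← hCqrep]; module)
        by_contra hk
        apply hne
        have hb : b = 0 := by
          have h : b * s = 0 := by linear_combination E1
          rcases mul_eq_zero.mp h with h' | h'
          exacts [h', absurd h' hs]
        have hc : c = 0 := by
          have h : c * (-s₁ + s * e₁) = 0 := by linear_combination E2 - s₃ * hb
          rcases mul_eq_zero.mp h with h' | h'
          exacts [h', absurd h' hk]
        have ha : a = 0 := by
          have h : a * s = 0 := by linear_combination E3 - s₄ * hb - (-s₂ + s * e₂) * hc
          rcases mul_eq_zero.mp h with h' | h'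
          exacts [h', absurd h' hs]
        exact ⟨ha, hb, hc⟩
      have he₁ : e₁ = 0 := by
        have l1 := hProbe1 1 one_ne_zero
        have l2 := hProbe1 2 two_ne_zero
        linear_combination l2 - l1
      have hs₁ : s₁ = 0 := by
        have l1 := hProbe1 1 one_ne_zero
        linear_combination -l1 + he₁
      have hProbe2 : ∀ s : ℂ, s ≠ 0 → s₄ + s * b₂ = 0 := by
        intro s hs
        obtain ⟨a, b, c, hne, E1, E2, E3⟩ := probe (zh + s • p)
          0 s 0 0 (s₃ + s * b₁) (s₄ + s * b₂) (-s) (-s₁ + s * c₁) (-s₂ + s * c₂)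
          (by rw [map_add, map_smul, hAz, hAp]; module)
          (by rw [map_add, map_smul, hBzeq, hAw, ← hBprep]; module)
          (by rw [map_add, map_smul, hCzeq, hAu, hCprep]; module)
        by_contra hk
        apply hne
        have hc : c = 0 := by
          have h : c * s = 0 := by linear_combination -E1
          rcases mul_eq_zero.mp h with h' | h'
          exacts [h', absurd h' hs]
        have hb : b = 0 := by
          have h : b * (s₄ + s * b₂) = 0 := by
            linear_combination E3 - (-s₂ + s * c₂) * hc
          rcases mul_eq_zero.mp h with h' | h'
          exacts [h', absurd h' hk]
        have ha : a = 0 := by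
          have h : a * s = 0 := by
            linear_combination E2 - (s₃ + s * b₁) * hb - (-s₁ + s * c₁) * hc
          rcases mul_eq_zero.mp h with h' | h'
          exacts [h', absurd h' hs]
        exact ⟨ha, hb, hc⟩
      have hb₂ : b₂ = 0 := by
        have l1 := hProbe2 1 one_ne_zero
        have l2 := hProbe2 2 two_ne_zero
        linear_combination l2 - l1
      have hs₄ : s₄ = 0 := by
        have l1 := hProbe2 1 one_ne_zero
        linear_combination l1 - hb₂
      have hσ : s₂ ≠ 0 := by
        intro h0
        have hAu0 : A u = 0 := by rw [hAu, hs₁, h0]; simp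
        have h9 := hAuw.ne_zero 0
        simp [hAu0] at h9
      have hK : ∀ s r : ℂ, s ≠ 0 → r ≠ 0 →
          2 * s₂ + s * (b₁ - c₂) + r * (c₁ - e₂) = 0 := by
        intro s r hs hr
        obtain ⟨a, b, c, hne, E1, E2, E3⟩ := probe (zh + s • p + r • q)
          0 s r r (s₃ + s * b₁) 0 (-s) (s * c₁) (-s₂ + s * c₂ + r * e₂)
          (by rw [map_add, map_add, map_smul, map_smul, hAz, hAp, hAq]; module)
          (by
            rw [map_add, map_add, map_smul, map_smul, hBzeq, hAw, ← hBprep, hs₄, hb₂]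
            module)
          (by
            rw [map_add, map_add, map_smul, map_smul, hCzeq, hAu, hCprep, ← hCqrep, hs₁, he₁]
            module)
        have hcne : c ≠ 0 := by
          intro hc0
          apply hne
          have hb0 : b = 0 := by
            have h : b * r = 0 := by linear_combination E1 + s * hc0
            rcases mul_eq_zero.mp h with h' | h'
            exacts [h', absurd h' hr]
          have ha0 : a = 0 := by
            have h : a * s = 0 := by
              linear_combination E2 - (s₃ + s * b₁) * hb0 - s * c₁ * hc0
            rcases mul_eq_zero.mp h with h' | h'
            exacts [h', absurd h' hs]
          exact ⟨ha0, hb0, hc0⟩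
        have h6 : c * (s * (2 * s₂ + s * (b₁ - c₂) + r * (c₁ - e₂))) = 0 := by
          linear_combination r * E2 - s * E3 - (s₃ + s * b₁) * E1 + c * s * hs23
        rcases mul_eq_zero.mp h6 with h' | h'
        · exact absurd h' hcne
        · rcases mul_eq_zero.mp h' with h'' | h''
          · exact absurd h'' hs
          · exact h''
      have K1 := hK 1 1 one_ne_zero one_ne_zero
      have K2 := hK (-1) (-1) (by norm_num) (by norm_num)
      exact hσ (by linear_combination (K1 + K2) / 4)
  · -- rank-1 case
    have hdepuw := OKS.dep_of_not_indep hAuw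
    obtain ⟨δ, μ, c₁, c₂, hμ, hδne, hδrep, hAform⟩ :
        ∃ (δ : Module.Dual ℂ V) (μ c₁ c₂ : ℂ), μ ≠ 0 ∧ δ ≠ 0 ∧
          δ = c₁ • B v₀ + c₂ • C v₀ ∧ ∀ x, A x = (μ * δ x) • δ := by
      by_cases hAu0 : A u = 0
      · have hAx : ∀ x, A x = (A w x) • C v₀ := by
          intro x
          rw [hAy x]
          rw [show A x u = A u x from hsymA x u, hAu0]
          rw [show A x w = A w x from hsymA x w]
          simp
        have hAwne : A w ≠ 0 := by
          intro h0
          apply hA0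
          apply LinearMap.ext; intro x
          rw [hAx x, h0]
          simp
        have hγne : C v₀ ≠ 0 := by
          have := hBC.ne_zero 1; simpa using this
        obtain ⟨y₀, hy₀⟩ := OKS.exists_pt hγne
        have hsym' : ∀ x y, A w x * C v₀ y = A w y * C v₀ x := by
          intro x y
          have h1 : A x y = A w x * C v₀ y := by
            rw [show A x y = (A x) y from rfl, hAx x]
            simp [smul_eq_mul]
          have h2 : A y x = A w y * C v₀ x := by
            rw [show A y x = (A y) x from rfl, hAx y]
            simp [smul_eq_mul]
          rw [← h1, ← h2, hsymA x y]
        have hμform : ∀ x, A w x = A w y₀ / C v₀ y₀ * C v₀ x := by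
          intro x
          have h9 := hsym' x y₀
          field_simp
          linear_combination h9
        have hμne : A w y₀ / C v₀ y₀ ≠ 0 := by
          intro h0
          apply hAwne
          apply LinearMap.ext; intro x
          rw [LinearMap.zero_apply, hμform x, h0, zero_mul]
        refine ⟨C v₀, A w y₀ / C v₀ y₀, 0, 1, hμne, hγne, by module, ?_⟩
        intro x
        rw [hAx x, hμform x]
      · obtain ⟨z₀, hz₀⟩ := OKS.exists_pt hAu0
        have hAwk : A w = (A w z₀ / A u z₀) • A u := OKS.smul_of_minors hz₀ hdepuw
        have hAx : ∀ x, A x = (A u x) • (B v₀ + (A w z₀ / A u z₀) • C v₀) := by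
          intro x
          rw [hAy x]
          rw [show A x u = A u x from hsymA x u]
          rw [show A x w = A w x from hsymA x w]
          rw [show A w x = A w z₀ / A u z₀ * A u x from by
            conv_lhs => rw [show A w x = (A w) x from rfl, hAwk]
            simp only [LinearMap.smul_apply, smul_eq_mul]]
          module
        have hδ₀ne : B v₀ + (A w z₀ / A u z₀) • C v₀ ≠ 0 := by
          intro h0
          have h9 := Fintype.linearIndependent_iff.mp hBC ![1, A w z₀ / A u z₀] (by
            rw [Fin.sum_univ_two]
            simp only [Matrix.cons_val_zero, Matrix.cons_val_one, Matrix.head_cons, one_smul]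
            exact h0) 0
          simp at h9
        obtain ⟨y₀, hy₀⟩ := OKS.exists_pt hδ₀ne
        have hsym' : ∀ x y, A u x * (B v₀ + (A w z₀ / A u z₀) • C v₀) y
            = A u y * (B v₀ + (A w z₀ / A u z₀) • C v₀) x := by
          intro x y
          have h1 : A x y = A u x * (B v₀ + (A w z₀ / A u z₀) • C v₀) y := by
            rw [show A x y = (A x) y from rfl, hAx x]
            simp only [LinearMap.add_apply, LinearMap.smul_apply, smul_eq_mul]
            try ring
          have h2 : A y x = A u y * (B v₀ + (A w z₀ / A u z₀) • C v₀) x := by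
            rw [show A y x = (A y) x from rfl, hAx y]
            simp only [LinearMap.add_apply, LinearMap.smul_apply, smul_eq_mul]
            try ring
          rw [← h1, ← h2, hsymA x y]
        have hμform : ∀ x, A u x = A u y₀ / (B v₀ + (A w z₀ / A u z₀) • C v₀) y₀
            * (B v₀ + (A w z₀ / A u z₀) • C v₀) x := by
          intro x
          have h9 := hsym' x y₀
          rw [div_mul_eq_mul_div, eq_div_iff hy₀]
          linear_combination h9
        have hμne : A u y₀ / (B v₀ + (A w z₀ / A u z₀) • C v₀) y₀ ≠ 0 := by
          intro h0
          apply hAu0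
          apply LinearMap.ext; intro x
          rw [LinearMap.zero_apply, hμform x, h0, zero_mul]
        refine ⟨B v₀ + (A w z₀ / A u z₀) • C v₀,
          A u y₀ / (B v₀ + (A w z₀ / A u z₀) • C v₀) y₀, 1, A w z₀ / A u z₀,
          hμne, hδ₀ne, by module, ?_⟩
        intro x
        rw [hAx x, hμform x]
    have hc₁₂ : ¬(c₁ = 0 ∧ c₂ = 0) := by
      rintro ⟨h1, h2⟩
      apply hδne
      rw [hδrep, h1, h2]
      simp
    have hδu : δ u = c₁ := by
      rw [hδrep]
      simp only [LinearMap.add_apply, LinearMap.smul_apply, smul_eq_mul, hu1, hu2]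
      ring
    have hδw : δ w = c₂ := by
      rw [hδrep]
      simp only [LinearMap.add_apply, LinearMap.smul_apply, smul_eq_mul, hw1, hw2]
      ring
    have hδU : δ ∈ U := by
      rw [hδrep]
      exact U.add_mem (U.smul_mem _ hβU) (U.smul_mem _ hγU)
    have hN₀x : ∀ x : V, (c₁ • B + c₂ • C) x = c₁ • B x + c₂ • C x := by
      intro x
      simp only [LinearMap.add_apply, LinearMap.smul_apply]
    have hN₀U : ∀ x, (c₁ • B + c₂ • C) x ∈ U := by
      have hstep : ∀ x, δ x ≠ 0 → (c₁ • B + c₂ • C) x ∈ U := by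
        intro x hx
        have h2 := hIIU x
        have eAxu : A x u = μ * δ x * c₁ := by
          rw [show A x u = (A x) u from rfl, hAform x]
          simp only [LinearMap.smul_apply, smul_eq_mul, hδu]
        have eAxw : A x w = μ * δ x * c₂ := by
          rw [show A x w = (A x) w from rfl, hAform x]
          simp only [LinearMap.smul_apply, smul_eq_mul, hδw]
        have e : (A x u) • B x + (A x w) • C x = (μ * δ x) • (c₁ • B + c₂ • C) x := by
          rw [eAxu, eAxw, hN₀x x]
          module
        rw [e] at h2
        have h3 := U.smul_mem (μ * δ x)⁻¹ h2
        rwa [smul_smul, inv_mul_cancel₀ (mul_ne_zero hμ hx), one_smul] at h3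
      intro x
      obtain ⟨xb, hxb⟩ := OKS.exists_pt hδne
      by_cases hx : δ x = 0
      · have h1 := hstep (x + xb) (by rw [map_add, hx, zero_add]; exact hxb)
        have h2 := hstep xb hxb
        have h3 : (c₁ • B + c₂ • C) x = (c₁ • B + c₂ • C) (x + xb) - (c₁ • B + c₂ • C) xb := by
          rw [map_add]; abel
        rw [h3]
        exact U.sub_mem h1 h2
      · exact hstep x hx
    have hANind : ∀ cc : ℂ, (c₁ • B + c₂ • C) ≠ cc • A := by
      intro cc hN
      have h9 := Fintype.linearIndependent_iff.mp hABC ![-cc, c₁, c₂] (by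
        rw [Fin.sum_univ_three]
        simp only [Matrix.cons_val_zero, Matrix.cons_val_one, Matrix.head_cons,
          Matrix.cons_val_two, Matrix.tail_cons]
        linear_combination (norm := module) hN)
      exact hc₁₂ ⟨by simpa using h9 1, by simpa using h9 2⟩
    have hsymN₀ : ∀ x y, (c₁ • B + c₂ • C) x y = (c₁ • B + c₂ • C) y x := by
      intro x y
      simp only [LinearMap.add_apply, LinearMap.smul_apply, smul_eq_mul]
      rw [hsymB x y, hsymC x y]
    by_cases hc₁ : c₁ = 0
    · have hc₂ : c₂ ≠ 0 := fun h => hc₁₂ ⟨hc₁, h⟩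
      have hspanP : ∀ M ∈ X, ∃ a b c : ℂ, M = a • A + b • (c₁ • B + c₂ • C) + c • B := by
        intro M hM
        obtain ⟨a, b, c, hMc⟩ := hcoords M hM
        refine ⟨a, c * c₂⁻¹, b - c * c₁ * c₂⁻¹, ?_⟩
        rw [hMc]
        match_scalars
        · ring
        · field_simp; ring
        · field_simp
      have hPU := OKS.endgame X U A (c₁ • B + c₂ • C) B δ μ hμ hδne hAform hN₀U hδU
        hANind hsymN₀ hspanP hev
      refine ⟨hPU, ?_⟩
      intro v
      have e : C v = c₂⁻¹ • ((c₁ • B + c₂ • C) v - c₁ • B v) := by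
        rw [hN₀x v]
        match_scalars <;> (try field_simp) <;> ring
      rw [e]
      exact U.smul_mem _ (U.sub_mem (hN₀U v) (U.smul_mem _ (hPU v)))
    · have hspanP : ∀ M ∈ X, ∃ a b c : ℂ, M = a • A + b • (c₁ • B + c₂ • C) + c • C := by
        intro M hM
        obtain ⟨a, b, c, hMc⟩ := hcoords M hM
        refine ⟨a, b * c₁⁻¹, c - b * c₂ * c₁⁻¹, ?_⟩
        rw [hMc]
        match_scalars
        · ring
        · field_simp
        · field_simp; ring
      have hPU := OKS.endgame X U A (c₁ • B + c₂ • C) C δ μ hμ hδne hAform hN₀U hδU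
        hANind hsymN₀ hspanP hev
      refine ⟨?_, hPU⟩
      intro v
      have e : B v = c₁⁻¹ • ((c₁ • B + c₂ • C) v - c₂ • C v) := by
        rw [hN₀x v]
        match_scalars <;> (try field_simp) <;> ring
      rw [e]
      exact U.smul_mem _ (U.sub_mem (hN₀U v) (U.smul_mem _ (hPU v)))
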